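/- Let (X, B, μ) be a measure space and T : X → X a bi-measurable, nonsingular, ergodic transformation. If T satisfies the intersection property (for every Ω ∈ B with μ(Ω) > 0 there exists k ≥ 1 with μ(T^{k+1}(Ω) ∩ T^k(Ω)) > 0), then T is exact: every set Ω ∈ ∩_{m≥1} T^{-m}(B) has μ(Ω) = 0 or μ(X∖Ω) = 0. -/

import Mathlib

open MeasureTheory Set Function

/-- A set is a tail set for `T` if it equals the preimage of its image under
every positive iterate of `T`. -/
def IsTailSet {X : Type*} (T : X → X) (s : Set X) : Prop :=
  ∀ m : ℕ, 1 ≤ m → s = T^[m] ⁻¹' (T^[m] '' s)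

lemma isTailSet_compl {X : Type*} {T : X → X} {s : Set X} (hs : IsTailSet T s) :
    IsTailSet T sᶜ := by
  intro m hm
  refine Subset.antisymm (subset_preimage_image _ _) ?_
  intro x hx
  simp only [mem_preimage] at hx
  obtain ⟨z, hz, hzx⟩ := hx
  intro hxs
  apply hz
  rw [hs m hm, mem_preimage, hzx]
  exact mem_image_of_mem _ hxs

lemma isTailSet_inter {X : Type*} {T : X → X} {s t : Set X}
    (hs : IsTailSet T s) (ht : IsTailSet T t) : IsTailSet T (s ∩ t) := by
  intro m hm
  refine Subset.antisymm (subset_preimage_image _ _) ?_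
  intro x hx
  simp only [mem_preimage] at hx
  constructor
  · rw [hs m hm, mem_preimage]
    exact image_mono inter_subset_left hx
  · rw [ht m hm, mem_preimage]
    exact image_mono inter_subset_right hx

lemma isTailSet_preimage {X : Type*} {T : X → X} {s : Set X} (hs : IsTailSet T s) :
    IsTailSet T (T ⁻¹' s) := by
  intro m hm
  refine Subset.antisymm (subset_preimage_image _ _) ?_
  intro x hx
  simp only [mem_preimage] at hx ⊢
  obtain ⟨z, hz, hzx⟩ := hx
  rw [hs m hm, mem_preimage]
  have : T^[m] (T x) = T^[m] (T z) := by
    rw [← Function.iterate_succ_apply, ← Function.iterate_succ_apply, 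
      Function.iterate_succ_apply', Function.iterate_succ_apply', hzx]
  rw [this]
  exact mem_image_of_mem _ hz

lemma measurable_iterate_image {X : Type*} [MeasurableSpace X] {T : X → X}
    (hbi : ∀ s : Set X, MeasurableSet s → MeasurableSet (T '' s))
    (n : ℕ) {s : Set X} (hs : MeasurableSet s) : MeasurableSet (T^[n] '' s) := by
  induction n with
  | zero => simpa using hs
  | succ n ih =>
      rw [Function.iterate_succ', Set.image_comp]
      exact hbi _ ih

lemma iterate_preimage_null_iff {X : Type*} [MeasurableSpace X] {μ : Measure X} {T : X → X}
    (hT : Measurable T)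
    (hns : ∀ s : Set X, MeasurableSet s → (μ (T ⁻¹' s) = 0 ↔ μ s = 0))
    (n : ℕ) {s : Set X} (hs : MeasurableSet s) :
    μ (T^[n] ⁻¹' s) = 0 ↔ μ s = 0 := by
  induction n with
  | zero => simp
  | succ n ih =>
      rw [Function.iterate_succ, Set.preimage_comp]
      rw [hns _ (hs.preimage (hT.iterate n))]
      exact ih

lemma tail_inter_preimage_pos {X : Type*} [MeasurableSpace X] {μ : Measure X} {T : X → X}
    (hT : Measurable T)
    (hbi : ∀ s : Set X, MeasurableSet s → MeasurableSet (T '' s))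
    (hns : ∀ s : Set X, MeasurableSet s → (μ (T ⁻¹' s) = 0 ↔ μ s = 0))
    (hint : ∀ s : Set X, MeasurableSet s → 0 < μ s →
      ∃ k : ℕ, 1 ≤ k ∧ 0 < μ (T^[k+1] '' s ∩ T^[k] '' s))
    {s : Set X} (hsm : MeasurableSet s) (hs : IsTailSet T s) (hpos : 0 < μ s) :
    0 < μ (s ∩ T ⁻¹' s) := by
  obtain ⟨k, hk, hposk⟩ := hint s hsm hpos
  have hu : MeasurableSet (T^[k+1] '' s ∩ T^[k] '' s) :=
    (measurable_iterate_image hbi (k+1) hsm).inter (measurable_iterate_image hbi k hsm)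
  have key : T^[k+1] ⁻¹' (T^[k+1] '' s ∩ T^[k] '' s) = s ∩ T ⁻¹' s := by
    rw [Set.preimage_inter, ← hs (k+1) (by omega)]
    congr 1
    rw [Function.iterate_succ, Set.preimage_comp, ← hs k hk]
  have := iterate_preimage_null_iff hT hns (k+1) hu
  rw [key] at this
  rw [pos_iff_ne_zero] at hposk ⊢
  exact fun h => hposk (this.mp h)

/-- If a bi-measurable, nonsingular, ergodic transformation satisfies the
intersection property, then it is exact. -/
theorem intersection_property_implies_exact
    {X : Type*} [MeasurableSpace X] (μ : Measure X) (T : X → X)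
    (hT : Measurable T)
    (hbi : ∀ s : Set X, MeasurableSet s → MeasurableSet (T '' s))
    (hns : ∀ s : Set X, MeasurableSet s → (μ (T ⁻¹' s) = 0 ↔ μ s = 0))
    (herg : ∀ s : Set X, MeasurableSet s → T ⁻¹' s = s → μ s = 0 ∨ μ sᶜ = 0)
    (hint : ∀ s : Set X, MeasurableSet s → 0 < μ s →
      ∃ k : ℕ, 1 ≤ k ∧ 0 < μ (T^[k+1] '' s ∩ T^[k] '' s))
    (Ω : Set X) (hΩ : MeasurableSet Ω)
    (htail : ∀ m : ℕ, 1 ≤ m → Ω = T^[m] ⁻¹' (T^[m] '' Ω)) :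
    μ Ω = 0 ∨ μ Ωᶜ = 0 := by
  have hTail : IsTailSet T Ω := htail
  -- Step 1: Ω is invariant mod null sets.
  have null1 : μ (Ω \ T ⁻¹' Ω) = 0 := by
    by_contra h
    have hpos : 0 < μ (Ω ∩ T ⁻¹' Ωᶜ) := by
      rw [pos_iff_ne_zero]
      rwa [Set.diff_eq, ← Set.preimage_compl] at h
    have hsm : MeasurableSet (Ω ∩ T ⁻¹' Ωᶜ) := hΩ.inter (hΩ.compl.preimage hT)
    have hst : IsTailSet T (Ω ∩ T ⁻¹' Ωᶜ) :=
      isTailSet_inter hTail (isTailSet_preimage (isTailSet_compl hTail))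
    have := tail_inter_preimage_pos hT hbi hns hint hsm hst hpos
    have hempty : (Ω ∩ T ⁻¹' Ωᶜ) ∩ T ⁻¹' (Ω ∩ T ⁻¹' Ωᶜ) = ∅ := by
      apply Set.eq_empty_of_forall_notMem
      rintro x ⟨⟨-, hx2⟩, hx3, -⟩
      exact hx2 hx3
    rw [hempty] at this
    simp at this
  have null2 : μ (T ⁻¹' Ω \ Ω) = 0 := by
    by_contra h
    have hpos : 0 < μ (Ωᶜ ∩ T ⁻¹' Ω) := by
      rw [pos_iff_ne_zero]
      rwa [Set.diff_eq, Set.inter_comm] at h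
    have hsm : MeasurableSet (Ωᶜ ∩ T ⁻¹' Ω) := hΩ.compl.inter (hΩ.preimage hT)
    have hst : IsTailSet T (Ωᶜ ∩ T ⁻¹' Ω) :=
      isTailSet_inter (isTailSet_compl hTail) (isTailSet_preimage hTail)
    have := tail_inter_preimage_pos hT hbi hns hint hsm hst hpos
    have hempty : (Ωᶜ ∩ T ⁻¹' Ω) ∩ T ⁻¹' (Ωᶜ ∩ T ⁻¹' Ω) = ∅ := by
      apply Set.eq_empty_of_forall_notMem
      rintro x ⟨⟨-, hx2⟩, hx3, -⟩
      exact hx3 hx2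
    rw [hempty] at this
    simp at this
  -- The one-step symmetric difference is null.
  set d : Set X := (Ω \ T ⁻¹' Ω) ∪ (T ⁻¹' Ω \ Ω) with hd_def
  have hdm : MeasurableSet d :=
    (hΩ.diff (hΩ.preimage hT)).union ((hΩ.preimage hT).diff hΩ)
  have hdnull : μ d = 0 := measure_union_null null1 null2
  -- Step 2: all iterated symmetric differences are null.
  set E : ℕ → Set X := fun n => T^[n] ⁻¹' Ω with hE_def
  set D : ℕ → Set X := fun n => (Ω \ E n) ∪ (E n \ Ω) with hD_def
  have hDnull : ∀ n, μ (D n) = 0 := by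
    intro n
    induction n with
    | zero => simp [hD_def, hE_def]
    | succ n ih =>
        have hEn : E (n+1) = T^[n] ⁻¹' (T ⁻¹' Ω) := by
          simp only [hE_def]
          rw [Function.iterate_succ', Set.preimage_comp]
        have hsub : D (n+1) ⊆ D n ∪ T^[n] ⁻¹' d := by
          intro x hx
          rcases hx with ⟨hx1, hx2⟩ | ⟨hx1, hx2⟩
          · by_cases hxe : x ∈ E n
            · right
              rw [hEn] at hx2
              exact Or.inl ⟨hxe, hx2⟩
            · exact Or.inl (Or.inl ⟨hx1, hxe⟩)
          · by_cases hxe : x ∈ E n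
            · exact Or.inl (Or.inr ⟨hxe, hx2⟩)
            · right
              rw [hEn] at hx1
              exact Or.inr ⟨hx1, hxe⟩
        have hpre : μ (T^[n] ⁻¹' d) = 0 :=
          (iterate_preimage_null_iff hT hns n hdm).mpr hdnull
        exact measure_mono_null hsub (measure_union_null ih hpre)
  -- Step 3: the limsup set is exactly invariant.
  set sStar : Set X := ⋂ N : ℕ, ⋃ n : ℕ, ⋃ _ : N ≤ n, E n with hs_def
  have hsm : MeasurableSet sStar := by
    apply MeasurableSet.iInter
    intro N
    apply MeasurableSet.iUnion
    intro n
    apply MeasurableSet.iUnion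
    intro _
    exact hΩ.preimage (hT.iterate n)
  have hmem : ∀ x, x ∈ sStar ↔ ∀ N : ℕ, ∃ n, N ≤ n ∧ T^[n] x ∈ Ω := by
    intro x
    simp [hs_def, hE_def]
  have hinv : T ⁻¹' sStar = sStar := by
    ext x
    rw [Set.mem_preimage, hmem, hmem]
    constructor
    · intro h N
      obtain ⟨n, hn, hmemn⟩ := h N
      refine ⟨n + 1, by omega, ?_⟩
      rwa [Function.iterate_succ_apply]
    · intro h N
      obtain ⟨n, hn, hmemn⟩ := h (N + 1)
      obtain ⟨m, rfl⟩ : ∃ m, n = m + 1 := ⟨n - 1, by omega⟩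
      refine ⟨m, by omega, ?_⟩
      rwa [Function.iterate_succ_apply] at hmemn
  -- Step 4: Ω and sStar agree mod null sets.
  have hdiff1 : μ (Ω \ sStar) = 0 := by
    refine measure_mono_null ?_ (measure_iUnion_null hDnull)
    intro x ⟨hx1, hx2⟩
    rw [hmem] at hx2
    push_neg at hx2
    obtain ⟨N, hN⟩ := hx2
    refine Set.mem_iUnion.mpr ⟨N, Or.inl ⟨hx1, ?_⟩⟩
    exact fun h => hN N le_rfl h
  have hdiff2 : μ (sStar \ Ω) = 0 := by
    refine measure_mono_null ?_ (measure_iUnion_null hDnull)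
    intro x ⟨hx1, hx2⟩
    rw [hmem] at hx1
    obtain ⟨n, -, hn⟩ := hx1 0
    exact Set.mem_iUnion.mpr ⟨n, Or.inr ⟨hn, hx2⟩⟩
  -- Step 5: ergodicity.
  rcases herg sStar hsm hinv with h | h
  · left
    have : Ω ⊆ (Ω \ sStar) ∪ sStar := by
      intro x hx
      by_cases hxs : x ∈ sStar
      · exact Or.inr hxs
      · exact Or.inl ⟨hx, hxs⟩
    exact measure_mono_null this (measure_union_null hdiff1 h)
  · right
    have : Ωᶜ ⊆ (sStar \ Ω) ∪ sStarᶜ := by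
      intro x hx
      by_cases hxs : x ∈ sStar
      · exact Or.inl ⟨hxs, hx⟩
      · exact Or.inr hxs
    exact measure_mono_null this (measure_union_null hdiff2 h)
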